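/- arXiv:2506.04926 — 3 statements merged into one kernel-verified Lean document; each statement's English description precedes it below -/
import Mathlib

section
/- For any integers c ≥ 1 and n ≥ 0, the sum over p from 0 to floor(n/c) of the binomial coefficient C(n - p*c + p, p) equals the n-th generalized Fibonacci number G_n^c, where G_0^c = ... = G_{c-1}^c = 1 and G_n^c = G_{n-1}^c + G_{n-c}^c for n ≥ c. -/
/-- Harris–Styles: the sum over `p` from `0` to `⌊n/c⌋` of `C(n - p*c + p, p)` equals the
`n`-th generalized Fibonacci number with parameter `c`. -/
theorem sum_choose_eq_generalizedFibonacci (c : ℕ) (hc : 1 ≤ c) (G : ℕ → ℕ)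
    (hinit : ∀ i < c, G i = 1)
    (hrec : ∀ n, c ≤ n → G n = G (n - 1) + G (n - c)) (n : ℕ) :
    ∑ p ∈ Finset.range (n / c + 1), Nat.choose (n - p * c + p) p = G n := by
  induction n using Nat.strong_induction_on with
  | _ n ih =>
  by_cases hn : n < c
  · rw [Nat.div_eq_of_lt hn, hinit n hn]
    simp
  · push_neg at hn
    rw [hrec n hn, ← ih (n - 1) (by omega), ← ih (n - c) (by omega)]
    have hdiv : n / c = (n - c) / c + 1 := Nat.div_eq_sub_div hc hn
    rw [Finset.sum_range_succ']
    simp only [Nat.zero_mul, Nat.sub_zero, Nat.add_zero, Nat.choose_zero_right]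
    -- rewrite each term via Pascal
    have hterm : ∀ q ∈ Finset.range (n / c),
        Nat.choose (n - (q + 1) * c + (q + 1)) (q + 1)
          = Nat.choose (n - c - q * c + q) q + Nat.choose (n - (q + 1) * c + q) (q + 1) := by
      intro q hq
      rw [Finset.mem_range] at hq
      have h1 : (q + 1) * c ≤ n := by
        have := (Nat.le_div_iff_mul_le hc).mp (Nat.succ_le_of_lt hq)
        exact this
      have h2 : n - (q + 1) * c + (q + 1) = (n - (q + 1) * c + q) + 1 := by omega
      have h3 : n - c - q * c = n - (q + 1) * c := by
        have : (q + 1) * c = q * c + c := by ring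
        omega
      rw [h2, Nat.choose_succ_succ', h3]
    rw [Finset.sum_congr rfl hterm, Finset.sum_add_distrib]
    -- first sum equals S (n - c)
    have hA : ∑ q ∈ Finset.range (n / c), Nat.choose (n - c - q * c + q) q
        = ∑ p ∈ Finset.range ((n - c) / c + 1), Nat.choose (n - c - p * c + p) p := by
      rw [← hdiv]
    -- second sum equals S (n - 1) minus its first term
    have hB : ∑ q ∈ Finset.range (n / c), Nat.choose (n - (q + 1) * c + q) (q + 1)
        = ∑ q ∈ Finset.range ((n - 1) / c), Nat.choose (n - 1 - (q + 1) * c + (q + 1)) (q + 1) := by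
      rw [← Finset.sum_subset (Finset.range_subset_range.mpr (Nat.div_le_div_right (by omega : n - 1 ≤ n)))]
      · apply Finset.sum_congr rfl
        intro q hq
        rw [Finset.mem_range] at hq
        have h1 : (q + 1) * c ≤ n - 1 := (Nat.le_div_iff_mul_le hc).mp (Nat.succ_le_of_lt hq)
        congr 1
        omega
      · intro q hq hq'
        rw [Finset.mem_range] at hq hq'
        push_neg at hq'
        have h1 : ¬ (q + 1) * c ≤ n - 1 := by
          intro h
          exact absurd ((Nat.le_div_iff_mul_le hc).mpr h) (by omega)
        have h2 : n - (q + 1) * c + q = q := by omega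
        rw [h2]
        exact Nat.choose_succ_self q
    rw [hA, hB]
    have hS1 : ∑ p ∈ Finset.range ((n - 1) / c + 1), Nat.choose (n - 1 - p * c + p) p
        = ∑ q ∈ Finset.range ((n - 1) / c), Nat.choose (n - 1 - (q + 1) * c + (q + 1)) (q + 1) + 1 := by
      rw [Finset.sum_range_succ']
      simp
    rw [hS1]
    ring
end

section
/- For any integers k ≥ 1 and n ≥ k+1, the number of compositions of n into parts each of size at least k+1 equals G_{n-(k+1)}^{k+1}, the (n-k-1)-th generalized Fibonacci number with parameter k+1. -/
private def bumpList : List ℕ → List ℕ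
  | [] => []
  | a :: t => (a + 1) :: t

private lemma finite_S (c n : ℕ) (hc : 1 ≤ c) :
    Finite {l : List ℕ // l.sum = n ∧ ∀ x ∈ l, c ≤ x} := by
  apply Finite.of_injective
    (fun l => (⟨l.val, fun hi => lt_of_lt_of_le hc (l.2.2 _ hi), l.2.1⟩ : Composition n))
  intro a b h
  exact Subtype.ext (congrArg Composition.blocks h)

private lemma card_S_single (c n : ℕ) (hc : 1 ≤ c) (h1 : c ≤ n) (h2 : n < 2 * c) :
    Nat.card {l : List ℕ // l.sum = n ∧ ∀ x ∈ l, c ≤ x} = 1 := by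
  haveI : Unique {l : List ℕ // l.sum = n ∧ ∀ x ∈ l, c ≤ x} := by
    refine ⟨⟨⟨[n], by simp, by simpa using h1.trans (le_refl n)⟩⟩, ?_⟩
    rintro ⟨l, hs, hp⟩
    apply Subtype.ext
    match l with
    | [] => simp at hs; omega
    | [a] => simp at hs; simp [hs]
    | a :: b :: t =>
      exfalso
      have ha := hp a (by simp)
      have hb := hp b (by simp)
      simp [List.sum_cons] at hs
      omega
  exact Nat.card_unique

private lemma card_S_rec (c n : ℕ) (hc : 1 ≤ c) (hn : c + 1 ≤ n) :
    Nat.card {l : List ℕ // l.sum = n ∧ ∀ x ∈ l, c ≤ x} =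
      Nat.card {l : List ℕ // l.sum = n - 1 ∧ ∀ x ∈ l, c ≤ x} +
      Nat.card {l : List ℕ // l.sum = n - c ∧ ∀ x ∈ l, c ≤ x} := by
  haveI := finite_S c n hc
  haveI := finite_S c (n - 1) hc
  haveI := finite_S c (n - c) hc
  rw [← Nat.card_sum]
  symm
  have hφ1 : ∀ p : {l : List ℕ // l.sum = n - 1 ∧ ∀ x ∈ l, c ≤ x},
      (bumpList p.1).sum = n ∧ ∀ x ∈ bumpList p.1, c ≤ x := by
    rintro ⟨l, hs, hp⟩
    match l with
    | [] => simp at hs; omega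
    | a :: t =>
      constructor
      · simp [bumpList, List.sum_cons] at hs ⊢; omega
      · intro x hx
        simp [bumpList] at hx
        rcases hx with rfl | hx
        · exact le_trans (hp a (by simp)) (by omega)
        · exact hp x (by simp [hx])
  have hφ2 : ∀ p : {l : List ℕ // l.sum = n - c ∧ ∀ x ∈ l, c ≤ x},
      (c :: p.1).sum = n ∧ ∀ x ∈ c :: p.1, c ≤ x := by
    rintro ⟨l, hs, hp⟩
    refine ⟨by simp [List.sum_cons, hs]; omega, ?_⟩
    intro x hx
    rcases List.mem_cons.1 hx with rfl | hx
    · exact le_refl x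
    · exact hp x hx
  apply Nat.card_eq_of_bijective
    (Sum.elim (fun p => ⟨bumpList p.1, (hφ1 p).1, (hφ1 p).2⟩)
      (fun p => ⟨c :: p.1, (hφ2 p).1, (hφ2 p).2⟩))
  constructor
  · rintro (⟨l, hl⟩ | ⟨l, hl⟩) (⟨m, hm⟩ | ⟨m, hm⟩) h <;>
      simp only [Sum.elim_inl, Sum.elim_inr, Subtype.mk.injEq] at h
    · match l, m with
      | [], _ => simp at hl; omega
      | _, [] => simp at hm; omega
      | a :: t, b :: s =>
        simp only [bumpList, List.cons.injEq] at h
        obtain ⟨h1, h2⟩ := h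
        have hab : a = b := by omega
        subst hab; subst h2; rfl
    · match l with
      | [] => simp at hl; omega
      | a :: t =>
        exfalso
        have := hl.2 a (by simp)
        simp [bumpList] at h
        omega
    · match m with
      | [] => simp at hm; omega
      | a :: t =>
        exfalso
        have := hm.2 a (by simp)
        simp [bumpList] at h
        omega
    · simp_all
  · rintro ⟨l, hs, hp⟩
    match l with
    | [] => simp at hs; omega
    | a :: t =>
      have ha := hp a (by simp)
      rcases eq_or_lt_of_le ha with rfl | hlt
      · refine ⟨Sum.inr ⟨t, ?_, fun x hx => hp x (by simp [hx])⟩, ?_⟩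
        · simp [List.sum_cons] at hs; omega
        · simp
      · refine ⟨Sum.inl ⟨(a - 1) :: t, ?_, ?_⟩, ?_⟩
        · simp [List.sum_cons] at hs ⊢; omega
        · intro x hx
          rcases List.mem_cons.1 hx with rfl | hx
          · omega
          · exact hp x (by simp [hx])
        · simp [bumpList]
          omega

/-- The number of compositions of `n` into parts each of size at least `k+1` equals
`G_{n-(k+1)}^{k+1}`, the `(n-k-1)`-th generalized Fibonacci number with parameter `k+1`. -/
theorem numCompositions_eq_generalizedFibonacci (k n : ℕ) (hk : 1 ≤ k) (hn : k + 1 ≤ n)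
    (G : ℕ → ℕ) (hinit : ∀ i < k + 1, G i = 1)
    (hrec : ∀ m, k + 1 ≤ m → G m = G (m - 1) + G (m - (k + 1))) :
    Nat.card {l : List ℕ // l.sum = n ∧ ∀ x ∈ l, k + 1 ≤ x} = G (n - (k + 1)) := by
  set c := k + 1 with hc
  have hc1 : 1 ≤ c := by omega
  clear_value c
  clear hc hk
  induction n using Nat.strong_induction_on with
  | _ n ih =>
    by_cases h2 : n < 2 * c
    · rw [card_S_single c n hc1 hn h2, hinit (n - c) (by omega)]
    · push_neg at h2
      rw [card_S_rec c n hc1 (by omega), ih (n - 1) (by omega) (by omega),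
        ih (n - c) (by omega) (by omega), hrec (n - c) (by omega)]
      congr 2 <;> omega
end

section
/- Let k ≥ 2, let S be the k×k cyclic shift matrix, and let t ∈ {0,1}^k be a binary vector with t_1 = 0 and t_k = 1. Define i = (2S - I)^{-1}(nI + S)t for an integer n ≥ 1. Then the j-th coordinate equals i_j = (α_j · n + β_j)/(2^k - 1) where α_j = Σ_{l=1}^k 2^{(l-j) mod k} t_l and β_j = Σ_{l=1}^k 2^{(l-j-1) mod k} t_l, and moreover 0 < α_j < 2^k - 1 and 0 < β_j < 2^k - 1. -/
open Matrix

private lemma cyc_geo (k : ℕ) : ∑ m : Fin k, (2:ℚ)^(m:ℕ) = 2^k - 1 := by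
  rw [Fin.sum_univ_eq_sum_range, geom_sum_eq (by norm_num)]
  ring

private lemma cyc_sum_shift (k : ℕ) [NeZero k] (σ : Fin k ≃ Fin k) :
    ∑ l : Fin k, (2:ℚ)^((σ l : Fin k):ℕ) = 2^k - 1 := by
  rw [← cyc_geo k]
  exact Fintype.sum_equiv σ _ _ (fun l => rfl)

private lemma cyc_bound (k : ℕ) [NeZero k] (hk : 2 ≤ k) (σ : Fin k ≃ Fin k) (t : Fin k → ℚ)
    (ht : ∀ l, t l = 0 ∨ t l = 1) (ht1 : t 0 = 0) (htk : t ⟨k-1, by omega⟩ = 1) :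
    0 < ∑ l : Fin k, (2:ℚ)^((σ l : Fin k):ℕ) * t l ∧
    ∑ l : Fin k, (2:ℚ)^((σ l : Fin k):ℕ) * t l < 2^k - 1 := by
  have hnn : ∀ l ∈ Finset.univ, (0:ℚ) ≤ 2^((σ l : Fin k):ℕ) * t l := by
    intro l _
    rcases ht l with h | h <;> simp [h]
  constructor
  · have h1 := Finset.single_le_sum hnn (Finset.mem_univ (⟨k-1, by omega⟩ : Fin k))
    rw [htk, mul_one] at h1
    calc (0:ℚ) < 2^((σ ⟨k-1, by omega⟩ : Fin k):ℕ) := by positivity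
    _ ≤ _ := h1
  · rw [← cyc_sum_shift k σ]
    apply Finset.sum_lt_sum
    · intro l _
      rcases ht l with h | h <;> simp [h]
    · exact ⟨0, Finset.mem_univ 0, by rw [ht1, mul_zero]; positivity⟩

private lemma cyc_inv (k : ℕ) [NeZero k] (hk : 2 ≤ k)
    (S : Matrix (Fin k) (Fin k) ℚ) (hS : ∀ i j, S i j = if j = i + 1 then 1 else 0) :
    ((2:ℚ) • S - 1)⁻¹ = fun i j => 2^((j - i : Fin k):ℕ) / (2^k - 1) := by
  have hc : (2:ℚ)^k - 1 ≠ 0 := by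
    have : (2:ℚ)^1 ≤ 2^k := pow_le_pow_right₀ (by norm_num) (by omega)
    simp at this; intro h; nlinarith
  apply inv_eq_right_inv
  ext i j
  show ∑ l, ((2:ℚ) • S - 1) i l * (2^((j - l : Fin k):ℕ) / (2^k - 1)) = (1 : Matrix (Fin k) (Fin k) ℚ) i j
  simp only [Matrix.sub_apply, Matrix.smul_apply, hS, Matrix.one_apply, smul_eq_mul,
    sub_mul, mul_ite, ite_mul, one_mul, zero_mul, mul_zero, mul_one,
    Finset.sum_sub_distrib, Finset.sum_ite_eq, Finset.sum_ite_eq', Finset.mem_univ, if_true]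
  have hsub : j - (i+1) = (j - i) - 1 := by abel
  rw [hsub]
  rcases eq_or_ne i j with h | h
  · subst h
    have hd : (i : Fin k) - i = 0 := by abel
    rw [hd, if_pos rfl]
    have h0 : (((0:Fin k) - 1 : Fin k):ℕ) = k - 1 := by
      rcases k with _|k; · exact absurd rfl (NeZero.ne 0)
      rw [Fin.coe_sub_one, if_pos rfl]; omega
    rw [h0]
    simp only [Fin.val_zero, pow_zero]
    have : (2:ℚ) * 2^(k-1) = 2^k := by
      rw [← pow_succ']; congr 1; omega
    field_simp
    linarith [this]
  · rw [if_neg h]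
    have hd : (j - i : Fin k) ≠ 0 := by
      simp [sub_eq_zero]; exact fun hh => h hh.symm
    have h1 : (((j - i : Fin k) - 1 : Fin k):ℕ) = ((j - i : Fin k):ℕ) - 1 := by
      rcases k with _|k; · exact absurd rfl (NeZero.ne 0)
      rw [Fin.coe_sub_one, if_neg hd]
    rw [h1]
    have hv : 1 ≤ ((j - i : Fin k):ℕ) := by
      rcases Nat.eq_zero_or_pos ((j - i : Fin k):ℕ) with h0 | h0
      · exact absurd (Fin.ext h0) hd
      · omega
    have : (2:ℚ) * 2^(((j - i : Fin k):ℕ) - 1) = 2^((j - i : Fin k):ℕ) := by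
      rw [← pow_succ']; congr 1; omega
    field_simp
    linarith [this]

/-- With `S` the `k×k` cyclic shift matrix and `t` a 0/1 vector with `t_1 = 0`, `t_k = 1`,
the vector `i = (2S - I)⁻¹ (nI + S) t` has coordinates
`i_j = (α_j n + β_j)/(2^k - 1)` with `α_j = Σ_l 2^((l-j) mod k) t_l`,
`β_j = Σ_l 2^((l-j-1) mod k) t_l`, and `0 < α_j, β_j < 2^k - 1`. -/
theorem cycle_system_solution (k : ℕ) [NeZero k] (hk : 2 ≤ k) (n : ℕ) (hn : 1 ≤ n)
    (t : Fin k → ℚ) (ht : ∀ l, t l = 0 ∨ t l = 1) (ht1 : t 0 = 0)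
    (htk : t ⟨k - 1, by omega⟩ = 1)
    (S : Matrix (Fin k) (Fin k) ℚ) (hS : ∀ i j, S i j = if j = i + 1 then 1 else 0)
    (α β : Fin k → ℚ)
    (hα : ∀ j, α j = ∑ l, 2 ^ ((l - j : Fin k) : ℕ) * t l)
    (hβ : ∀ j, β j = ∑ l, 2 ^ ((l - j - 1 : Fin k) : ℕ) * t l) :
    ∀ j, Matrix.mulVec (((2 : ℚ) • S - 1)⁻¹)
          (Matrix.mulVec ((n : ℚ) • (1 : Matrix (Fin k) (Fin k) ℚ) + S) t) j =
        (α j * n + β j) / (2 ^ k - 1) ∧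
      0 < α j ∧ α j < 2 ^ k - 1 ∧ 0 < β j ∧ β j < 2 ^ k - 1 := by
  intro j
  have hαb : 0 < α j ∧ α j < 2^k - 1 := by
    rw [hα j]
    exact cyc_bound k hk (Equiv.subRight j) t ht ht1 htk
  have hβb : 0 < β j ∧ β j < 2^k - 1 := by
    have : (∑ l, (2:ℚ) ^ ((l - j - 1 : Fin k) : ℕ) * t l)
        = ∑ l, (2:ℚ) ^ ((Equiv.subRight (j+1) l : Fin k) : ℕ) * t l := by
      apply Finset.sum_congr rfl
      intro l _
      rw [Equiv.subRight_apply, ← sub_sub]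
    rw [hβ j, this]
    exact cyc_bound k hk (Equiv.subRight (j+1)) t ht ht1 htk
  refine ⟨?_, hαb.1, hαb.2, hβb.1, hβb.2⟩
  -- the vector (nI + S) t
  have hv : ∀ l, Matrix.mulVec ((n : ℚ) • (1 : Matrix (Fin k) (Fin k) ℚ) + S) t l
      = n * t l + t (l + 1) := by
    intro l
    simp only [Matrix.mulVec, dotProduct, Matrix.add_apply, Matrix.smul_apply,
      Matrix.one_apply, hS, smul_eq_mul, add_mul, mul_ite, ite_mul, one_mul, zero_mul,
      mul_zero, mul_one, Finset.sum_add_distrib, Finset.sum_ite_eq, Finset.sum_ite_eq',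
      Finset.mem_univ, if_true]
  rw [cyc_inv k hk S hS, funext hv]
  simp only [Matrix.mulVec, dotProduct]
  have : ∀ l ∈ Finset.univ, (2:ℚ)^((l - j : Fin k):ℕ) / (2^k - 1) *
      ((n : ℚ) * t l + t (l + 1))
      = ((2:ℚ)^((l - j : Fin k):ℕ) * (n * t l) + (2:ℚ)^((l - j : Fin k):ℕ) * t (l+1))
        / (2^k - 1) := by
    intro l _
    ring
  rw [Finset.sum_congr rfl this, ← Finset.sum_div, Finset.sum_add_distrib]
  congr 1
  have h1 : ∑ l : Fin k, (2:ℚ)^((l - j : Fin k):ℕ) * (n * t l) = α j * n := by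
    rw [hα, Finset.sum_mul]
    apply Finset.sum_congr rfl
    intro l _; ring
  have h2 : ∑ l : Fin k, (2:ℚ)^((l - j : Fin k):ℕ) * t (l+1) = β j := by
    rw [hβ]
    apply Fintype.sum_equiv (Equiv.addRight (1 : Fin k))
    intro l
    simp only [Equiv.coe_addRight]
    have : l - j = l + 1 - j - 1 := by abel
    rw [this]
  rw [h1, h2]
end
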